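/- For every integer k (positive, negative, or zero), there exists a tree T with γ⁰_st(T) = k. -/

import Mathlib

open SimpleGraph Finset

/-- Graph on `Fin n` given by a parent function. -/
def pg (n : ℕ) (p : ℕ → ℕ) (hp : ∀ a, 0 < a → p a < a) : SimpleGraph (Fin n) where
  Adj u v := (0 < u.val ∧ p u.val = v.val) ∨ (0 < v.val ∧ p v.val = u.val)
  symm := ⟨fun u v h => h.symm⟩
  loopless := by
    constructor; intro v h
    rcases h with ⟨h1, h2⟩ | ⟨h1, h2⟩ <;> exact absurd h2 (Nat.ne_of_lt (hp _ h1))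

lemma pg_adj {n p hp} {u v : Fin n} :
    (pg n p hp).Adj u v ↔ (0 < u.val ∧ p u.val = v.val) ∨ (0 < v.val ∧ p v.val = u.val) :=
  Iff.rfl

instance pgDec {n p hp} : DecidableRel (pg n p hp).Adj := fun _ _ =>
  decidable_of_iff _ pg_adj.symm

lemma pg_connected {n p hp} (hn : 0 < n) : (pg n p hp).Connected := by
  rw [connected_iff]
  refine ⟨?_, ⟨⟨0, hn⟩⟩⟩
  have key : ∀ k (v : Fin n), v.val ≤ k → (pg n p hp).Reachable v ⟨0, hn⟩ := by
    intro k
    induction k with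
    | zero =>
        intro v hv
        have : v = ⟨0, hn⟩ := by ext; simpa using hv
        rw [this]
    | succ k ih =>
      intro v hv
      by_cases h0 : v.val = 0
      · have : v = ⟨0, hn⟩ := by ext; simpa using h0
        rw [this]
      · have hlt : p v.val < v.val := hp _ (Nat.pos_of_ne_zero h0)
        have hadj : (pg n p hp).Adj v ⟨p v.val, lt_trans hlt v.isLt⟩ :=
          Or.inl ⟨Nat.pos_of_ne_zero h0, rfl⟩
        exact hadj.reachable.trans (ih _ (by simp; omega))
  intro u v
  exact (key _ u le_rfl).trans (key _ v le_rfl).symm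

lemma pg_acyclic (n p hp) : (pg n p hp).IsAcyclic := by
  intro v c hc
  obtain ⟨m, hm, hmax⟩ := Finset.exists_max_image c.support.toFinset (fun x : Fin n => x.val)
    ⟨v, by simp [SimpleGraph.Walk.start_mem_support]⟩
  rw [List.mem_toFinset] at hm
  have hmax' : ∀ x ∈ c.support, x.val ≤ m.val := fun x hx => hmax x (List.mem_toFinset.2 hx)
  have hdne : c.darts ≠ [] := by
    have h3 := hc.three_le_length
    intro h
    rw [← SimpleGraph.Walk.length_darts, h] at h3
    simp at h3
  have hd1 : ∃ d ∈ c.darts, d.fst = m := by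
    by_cases hmv : m = v
    · exact ⟨c.darts.head hdne, List.head_mem hdne,
        by simp [hmv, SimpleGraph.Walk.firstDart_toProd]⟩
    · have h1 : m ∈ c.darts.map (·.fst) ++ [v] := by
        rw [SimpleGraph.Walk.map_fst_darts_append]; exact hm
      rcases List.mem_append.1 h1 with h | h
      · obtain ⟨d, hd, hdm⟩ := List.mem_map.1 h
        exact ⟨d, hd, hdm⟩
      · simp at h; exact absurd h hmv
  have hd2 : ∃ d ∈ c.darts, d.snd = m := by
    by_cases hmv : m = v
    · exact ⟨c.darts.getLast hdne, List.getLast_mem hdne,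
        by simp [hmv, SimpleGraph.Walk.lastDart_toProd]⟩
    · have h1 : m ∈ v :: c.darts.map (·.snd) := by
        rw [SimpleGraph.Walk.cons_map_snd_darts]; exact hm
      rcases List.mem_cons.1 h1 with h | h
      · exact absurd h hmv
      · obtain ⟨d, hd, hdm⟩ := List.mem_map.1 h
        exact ⟨d, hd, hdm⟩
  obtain ⟨d1, hd1m, hd1f⟩ := hd1
  obtain ⟨d2, hd2m, hd2s⟩ := hd2
  -- the other endpoints of d1, d2 are both the parent of m
  have key : ∀ u : Fin n, (pg n p hp).Adj m u → u ∈ c.support → u.val = p m.val := by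
    intro u hadj hu
    have hum : u.val ≤ m.val := hmax' u hu
    rcases pg_adj.1 hadj with ⟨h1, h2⟩ | ⟨h1, h2⟩
    · omega
    · have := hp _ h1; omega
  have h1 : d1.snd.val = p m.val := by
    have hadj : (pg n p hp).Adj m d1.snd := hd1f ▸ d1.adj
    exact key _ hadj (SimpleGraph.Walk.dart_snd_mem_support_of_mem_darts c hd1m)
  have h2 : d2.fst.val = p m.val := by
    have hadj : (pg n p hp).Adj m d2.fst := (hd2s ▸ d2.adj).symm
    exact key _ hadj (SimpleGraph.Walk.dart_fst_mem_support_of_mem_darts c hd2m)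
  -- then d1 and d2 are distinct darts with the same edge
  have hne : d1 ≠ d2 := fun h => d1.adj.ne (by rw [hd1f, h, hd2s] : d1.fst = d1.snd)
  have hedge : d1.edge = d2.edge := by
    rw [SimpleGraph.Dart.edge, SimpleGraph.Dart.edge, Sym2.eq_iff]
    right
    constructor
    · rw [hd1f, ← hd2s]
    · apply Fin.ext; rw [h1, ← h2]
  have hnodup : (c.darts.map SimpleGraph.Dart.edge).Nodup := by
    have := hc.isTrail.edges_nodup
    rwa [SimpleGraph.Walk.edges] at this
  exact hne (List.inj_on_of_nodup_map hnodup hd1m hd2m hedge)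

lemma sum_triple {N : ℕ} (F : Fin N → ℤ) (a b c : Fin N)
    (hab : a ≠ b) (hac : a ≠ c) (hbc : b ≠ c) :
    ∑ x ∈ ({a, b, c} : Finset (Fin N)), F x = F a + F b + F c := by
  rw [Finset.sum_insert (by simp [hab, hac]), Finset.sum_insert (by simp [hbc]),
    Finset.sum_singleton, add_assoc]

/-! ### Spider family: center 0, branches 0–(3i+1), leaves 3i+2, 3i+3 -/

def pS (a : ℕ) : ℕ := if a % 3 = 1 then 0 else if a % 3 = 2 then a - 1 else a - 2

lemma hpS : ∀ a, 0 < a → pS a < a := by intro a ha; unfold pS; split_ifs <;> omega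

lemma pS_eq (a b : ℕ) : pS a = b ↔
    ((a % 3 = 1 ∧ b = 0) ∨ (a % 3 = 2 ∧ b = a - 1) ∨ (a % 3 ≠ 1 ∧ a % 3 ≠ 2 ∧ b = a - 2)) := by
  unfold pS; split_ifs <;> omega

lemma nY (t : ℕ) (i : ℕ) (hi : i < t) :
    (pg (3*t+1) pS hpS).neighborFinset ⟨3*i+1, by omega⟩ =
      {⟨0, by omega⟩, ⟨3*i+2, by omega⟩, ⟨3*i+3, by omega⟩} := by
  ext u
  have hu := u.isLt
  rw [mem_neighborFinset]
  simp only [pg_adj, Finset.mem_insert, Finset.mem_singleton, Fin.ext_iff, Fin.val_mk, pS_eq]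
  omega

lemma nL (t : ℕ) (i : ℕ) (hi : i < t) :
    (pg (3*t+1) pS hpS).neighborFinset ⟨3*i+2, by omega⟩ = {⟨3*i+1, by omega⟩} := by
  ext u
  have hu := u.isLt
  rw [mem_neighborFinset]
  simp only [pg_adj, Finset.mem_singleton, Fin.ext_iff, Fin.val_mk, pS_eq]
  omega

lemma sum_range_spider (g : ℕ → ℤ) (t : ℕ) :
    ∑ j ∈ Finset.range (3*t+1), g j
      = g 0 + ∑ i ∈ Finset.range t, (g (3*i+1) + g (3*i+2) + g (3*i+3)) := by
  induction t with
  | zero => simp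
  | succ t ih =>
    rw [show 3*(t+1)+1 = 3*t+1+1+1+1 from by ring, Finset.sum_range_succ,
      Finset.sum_range_succ, Finset.sum_range_succ, ih, Finset.sum_range_succ,
      show 3*t+1+1 = 3*t+2 from by omega, show 3*t+1+1+1 = 3*t+3 from by omega]
    ring

set_option maxHeartbeats 2000000 in
theorem spider (t : ℕ) (ht : 1 ≤ t) :
    (pg (3*t+1) pS hpS).Connected ∧ (pg (3*t+1) pS hpS).IsAcyclic ∧
    IsGreatest {w : ℤ | ∃ f : Fin (3*t+1) → ℤ,
        (∀ v, f v = 1 ∨ f v = -1) ∧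
        (∀ v : Fin (3*t+1), ∑ u ∈ (pg (3*t+1) pS hpS).neighborFinset v, f u ≤ 0) ∧
        w = ∑ v, f v} (-1 - t) := by
  refine ⟨pg_connected (by omega), pg_acyclic _ _ _, ?_, ?_⟩
  · -- membership
    refine ⟨fun v => if v.val % 3 = 2 then 1 else -1, ?_, ?_, ?_⟩
    · intro v; by_cases h : v.val % 3 = 2 <;> simp [h]
    · intro v
      have hv := v.isLt
      by_cases h1 : v.val % 3 = 1
      · have hvi : v = ⟨3*(v.val/3)+1, by omega⟩ := by ext; simp; omega
        rw [hvi, nY t (v.val/3) (by omega), sum_triple _ _ _ _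
          (by simp [Fin.ext_iff] <;> omega) (by simp [Fin.ext_iff] <;> omega) (by simp [Fin.ext_iff] <;> omega)]
        simp only [Fin.val_mk]
        rw [if_neg (by omega), if_pos (by omega), if_neg (by omega)]
        norm_num
      · apply Finset.sum_nonpos
        intro u hu
        rw [mem_neighborFinset] at hu
        have hu3 : u.val % 3 = 1 := by
          have hvv := v.isLt
          have huu := u.isLt
          rcases pg_adj.1 hu with ⟨ha, hb⟩ | ⟨ha, hb⟩ <;> rw [pS_eq] at hb <;> omega
        simp [hu3]
    · have hrw : ∑ v : Fin (3*t+1), (if (v:ℕ) % 3 = 2 then (1:ℤ) else -1)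
          = ∑ j ∈ Finset.range (3*t+1), (if j % 3 = 2 then (1:ℤ) else -1) :=
        Fin.sum_univ_eq_sum_range (fun j => if j % 3 = 2 then (1:ℤ) else -1) (3*t+1)
      rw [hrw, sum_range_spider]
      have hblock : ∀ i ∈ Finset.range t,
          ((if (3*i+1) % 3 = 2 then (1:ℤ) else -1) + (if (3*i+2) % 3 = 2 then (1:ℤ) else -1)
            + (if (3*i+3) % 3 = 2 then (1:ℤ) else -1)) = -1 := by
        intro i _
        rw [if_neg (by omega), if_pos (by omega), if_neg (by omega)]
        norm_num
      rw [Finset.sum_congr rfl hblock, Finset.sum_const, Finset.card_range,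
        if_neg (by omega)]
      push_cast
      ring
  · -- upper bound
    rintro w ⟨f, hf, hc, rfl⟩
    have hsum : ∑ v, f v
        = ∑ j ∈ Finset.range (3*t+1), (if h : j < 3*t+1 then f ⟨j, h⟩ else 0) := by
      rw [← Fin.sum_univ_eq_sum_range (fun j => if h : j < 3*t+1 then f ⟨j, h⟩ else 0) (3*t+1)]
      exact Finset.sum_congr rfl fun v _ => by rw [dif_pos v.isLt]
    have hy : ∀ i, i < t → ∀ (h : 3*i+1 < 3*t+1), f ⟨3*i+1, h⟩ = -1 := by
      intro i hi h
      have h2 := hc ⟨3*i+2, by omega⟩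
      rw [nL t i hi, Finset.sum_singleton] at h2
      rcases hf ⟨3*i+1, by omega⟩ with h | h <;> omega
    have htri : ∀ i, i < t → ∀ (h0 : 0 < 3*t+1) (h2 : 3*i+2 < 3*t+1) (h3 : 3*i+3 < 3*t+1),
        f ⟨0, h0⟩ + f ⟨3*i+2, h2⟩ + f ⟨3*i+3, h3⟩ ≤ 0 := by
      intro i hi h0 h2 h3
      have := hc ⟨3*i+1, by omega⟩
      rwa [nY t i hi, sum_triple _ _ _ _
        (by simp [Fin.ext_iff] <;> omega) (by simp [Fin.ext_iff] <;> omega)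
        (by simp [Fin.ext_iff] <;> omega)] at this
    rw [hsum, sum_range_spider]
    rcases hf ⟨0, by omega⟩ with h0 | h0
    · have hb : ∀ i ∈ Finset.range t,
          ((if h : 3*i+1 < 3*t+1 then f ⟨3*i+1, h⟩ else 0)
            + (if h : 3*i+2 < 3*t+1 then f ⟨3*i+2, h⟩ else 0)
            + (if h : 3*i+3 < 3*t+1 then f ⟨3*i+3, h⟩ else 0)) ≤ -3 := by
        intro i hi
        rw [Finset.mem_range] at hi
        rw [dif_pos (by omega : 3*i+1 < 3*t+1), dif_pos (by omega : 3*i+2 < 3*t+1),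
          dif_pos (by omega : 3*i+3 < 3*t+1)]
        have h1 := hy i hi (by omega)
        have h2 := htri i hi (by omega) (by omega) (by omega)
        rcases hf ⟨3*i+2, by omega⟩ with h3 | h3 <;>
          rcases hf ⟨3*i+3, by omega⟩ with h4 | h4 <;> omega
      have hS := Finset.sum_le_sum hb
      rw [Finset.sum_const, Finset.card_range] at hS
      rw [dif_pos (by omega : 0 < 3*t+1)]
      simp only [nsmul_eq_mul] at hS
      have ht' : (1:ℤ) ≤ t := by exact_mod_cast ht
      linarith
    · have hb : ∀ i ∈ Finset.range t,
          ((if h : 3*i+1 < 3*t+1 then f ⟨3*i+1, h⟩ else 0)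
            + (if h : 3*i+2 < 3*t+1 then f ⟨3*i+2, h⟩ else 0)
            + (if h : 3*i+3 < 3*t+1 then f ⟨3*i+3, h⟩ else 0)) ≤ -1 := by
        intro i hi
        rw [Finset.mem_range] at hi
        rw [dif_pos (by omega : 3*i+1 < 3*t+1), dif_pos (by omega : 3*i+2 < 3*t+1),
          dif_pos (by omega : 3*i+3 < 3*t+1)]
        have h1 := hy i hi (by omega)
        have h2 := htri i hi (by omega) (by omega) (by omega)
        rcases hf ⟨3*i+2, by omega⟩ with h3 | h3 <;>
          rcases hf ⟨3*i+3, by omega⟩ with h4 | h4 <;> omega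
      have hS := Finset.sum_le_sum hb
      rw [Finset.sum_const, Finset.card_range] at hS
      rw [dif_pos (by omega : 0 < 3*t+1)]
      simp only [nsmul_eq_mul] at hS
      linarith

/-! ### Caterpillar family: spine 3i (i < m), leaves 3i+1, 3i+2 -/

lemma sum_quad {N : ℕ} (F : Fin N → ℤ) (a b c d : Fin N)
    (hab : a ≠ b) (hac : a ≠ c) (had : a ≠ d) (hbc : b ≠ c) (hbd : b ≠ d) (hcd : c ≠ d) :
    ∑ x ∈ ({a, b, c, d} : Finset (Fin N)), F x = F a + F b + F c + F d := by
  rw [Finset.sum_insert (by simp [hab, hac, had]), Finset.sum_insert (by simp [hbc, hbd]),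
    Finset.sum_insert (by simp [hcd]), Finset.sum_singleton]
  ring

def pC (a : ℕ) : ℕ := if a % 3 = 0 then a - 3 else a - a % 3

lemma hpC : ∀ a, 0 < a → pC a < a := by intro a ha; unfold pC; split_ifs <;> omega

lemma pC_eq (a b : ℕ) : pC a = b ↔
    ((a % 3 = 0 ∧ b = a - 3) ∨ (a % 3 ≠ 0 ∧ b = a - a % 3)) := by
  unfold pC; split_ifs <;> omega

variable {m : ℕ}

lemma nC0 (hm : 2 ≤ m) (a b c d : Fin (3*m)) (ha : a.val = 0) (hb : b.val = 1)
    (hc : c.val = 2) (hd : d.val = 3) :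
    (pg (3*m) pC hpC).neighborFinset a = {b, c, d} := by
  ext u
  have hu := u.isLt
  rw [mem_neighborFinset]
  simp only [pg_adj, pC_eq, Finset.mem_insert, Finset.mem_singleton, Fin.ext_iff,
    ha, hb, hc, hd]
  omega

lemma nCmid (i : ℕ) (h1 : 1 ≤ i) (h2 : i < m - 1) (a b c d e : Fin (3*m))
    (ha : a.val = 3*i) (hb : b.val = 3*i-3) (hc : c.val = 3*i+1) (hd : d.val = 3*i+2)
    (he : e.val = 3*i+3) :
    (pg (3*m) pC hpC).neighborFinset a = {b, c, d, e} := by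
  ext u
  have hu := u.isLt
  rw [mem_neighborFinset]
  simp only [pg_adj, pC_eq, Finset.mem_insert, Finset.mem_singleton, Fin.ext_iff,
    ha, hb, hc, hd, he]
  omega

lemma nCend (hm : 2 ≤ m) (a b c d : Fin (3*m)) (ha : a.val = 3*m-3) (hb : b.val = 3*m-6)
    (hc : c.val = 3*m-2) (hd : d.val = 3*m-1) :
    (pg (3*m) pC hpC).neighborFinset a = {b, c, d} := by
  ext u
  have hu := u.isLt
  rw [mem_neighborFinset]
  simp only [pg_adj, pC_eq, Finset.mem_insert, Finset.mem_singleton, Fin.ext_iff,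
    ha, hb, hc, hd]
  omega

lemma nCleaf (hm : 2 ≤ m) (i : ℕ) (hi : i < m) (a b : Fin (3*m)) (ha : a.val = 3*i+1)
    (hb : b.val = 3*i) :
    (pg (3*m) pC hpC).neighborFinset a = {b} := by
  ext u
  have hu := u.isLt
  rw [mem_neighborFinset]
  simp only [pg_adj, pC_eq, Finset.mem_singleton, Fin.ext_iff, ha, hb]
  omega

lemma sum_range_cat (g : ℕ → ℤ) (m : ℕ) :
    ∑ j ∈ Finset.range (3*m), g j
      = ∑ i ∈ Finset.range m, (g (3*i) + g (3*i+1) + g (3*i+2)) := by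
  induction m with
  | zero => simp
  | succ m ih =>
    rw [show 3*(m+1) = 3*m+1+1+1 from by ring, Finset.sum_range_succ,
      Finset.sum_range_succ, Finset.sum_range_succ, ih, Finset.sum_range_succ,
      show 3*m+1+1 = 3*m+2 from by omega]
    ring

lemma sum_B (hm : 2 ≤ m) : ∑ i ∈ Finset.range m,
    ((1:ℤ) - (if i = 0 then 2 else 0) - (if i = m-1 then 2 else 0)) = (m:ℤ) - 4 := by
  simp only [Finset.sum_sub_distrib, Finset.sum_const, Finset.card_range,
    Finset.sum_ite_eq', Finset.mem_range]
  rw [if_pos (by omega), if_pos (by omega)]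
  push_cast
  ring


variable {m : ℕ}
/-- The optimal labelling for the caterpillar. -/
def gC (m j : ℕ) : ℤ :=
  if j % 3 = 0 then -1 else if j % 3 = 1 then 1 else if j = 2 ∨ j = 3*m-1 then -1 else 1

set_option maxHeartbeats 4000000 in
theorem caterpillar (hm : 2 ≤ m) :
    (pg (3*m) pC hpC).Connected ∧ (pg (3*m) pC hpC).IsAcyclic ∧
    IsGreatest {w : ℤ | ∃ f : Fin (3*m) → ℤ,
        (∀ v, f v = 1 ∨ f v = -1) ∧
        (∀ v : Fin (3*m), ∑ u ∈ (pg (3*m) pC hpC).neighborFinset v, f u ≤ 0) ∧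
        w = ∑ v, f v} ((m:ℤ) - 4) := by
  refine ⟨pg_connected (by omega), pg_acyclic _ _ _, ?_, ?_⟩
  · -- membership
    refine ⟨fun v => gC m v.val, ?_, ?_, ?_⟩
    · intro v
      show gC m v.val = 1 ∨ gC m v.val = -1
      unfold gC; split_ifs <;> simp
    · intro v
      have hv := v.isLt
      by_cases h0 : v.val % 3 = 0
      · by_cases hi0 : v.val = 0
        · rw [nC0 hm v ⟨1, by omega⟩ ⟨2, by omega⟩ ⟨3, by omega⟩ hi0 rfl rfl rfl,
            sum_triple _ _ _ _ (by simp [Fin.ext_iff]) (by simp [Fin.ext_iff])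
              (by simp [Fin.ext_iff])]
          simp only [Fin.val_mk]
          unfold gC
          split_ifs <;> omega
        · by_cases hiend : v.val = 3*m-3
          · rw [nCend hm v ⟨3*m-6, by omega⟩ ⟨3*m-2, by omega⟩ ⟨3*m-1, by omega⟩
                hiend rfl rfl rfl,
              sum_triple _ _ _ _ (by simp [Fin.ext_iff] <;> omega) (by simp [Fin.ext_iff] <;> omega)
                (by simp [Fin.ext_iff] <;> omega)]
            simp only [Fin.val_mk]
            unfold gC
            split_ifs <;> omega
          · rw [nCmid (v.val/3) (by omega) (by omega) v ⟨v.val-3, by omega⟩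
                ⟨v.val+1, by omega⟩ ⟨v.val+2, by omega⟩ ⟨v.val+3, by omega⟩
                (by omega) (by simp only [Fin.val_mk] <;> omega)
                (by simp only [Fin.val_mk] <;> omega) (by simp only [Fin.val_mk] <;> omega)
                (by simp only [Fin.val_mk] <;> omega),
              sum_quad _ _ _ _ _ (by simp [Fin.ext_iff] <;> omega) (by simp [Fin.ext_iff] <;> omega)
                (by simp [Fin.ext_iff] <;> omega) (by simp [Fin.ext_iff] <;> omega)
                (by simp [Fin.ext_iff] <;> omega) (by simp [Fin.ext_iff] <;> omega)]
            simp only [Fin.val_mk]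
            unfold gC
            split_ifs <;> omega
      · apply Finset.sum_nonpos
        intro u hu
        rw [mem_neighborFinset] at hu
        have hu3 : u.val % 3 = 0 := by
          have huu := u.isLt
          rcases pg_adj.1 hu with ⟨ha, hb⟩ | ⟨ha, hb⟩ <;> rw [pC_eq] at hb <;> omega
        simp [gC, hu3]
    · have hrw : ∑ v : Fin (3*m), gC m v.val
          = ∑ j ∈ Finset.range (3*m), gC m j :=
        Fin.sum_univ_eq_sum_range (fun j => gC m j) (3*m)
      rw [hrw, sum_range_cat]
      rw [Finset.sum_congr rfl (g := fun i => (1:ℤ) - (if i = 0 then 2 else 0)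
          - (if i = m-1 then 2 else 0)) (fun i hi => ?_), sum_B hm]
      rw [Finset.mem_range] at hi
      show gC m (3*i) + gC m (3*i+1) + gC m (3*i+2)
        = (1:ℤ) - (if i = 0 then 2 else 0) - (if i = m-1 then 2 else 0)
      unfold gC
      split_ifs <;> omega
  · -- upper bound
    rintro w ⟨f, hf, hc, rfl⟩
    have hsum : ∑ v, f v
        = ∑ j ∈ Finset.range (3*m), (if h : j < 3*m then f ⟨j, h⟩ else 0) := by
      rw [← Fin.sum_univ_eq_sum_range (fun j => if h : j < 3*m then f ⟨j, h⟩ else 0) (3*m)]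
      exact Finset.sum_congr rfl fun v _ => by rw [dif_pos v.isLt]
    have hspine : ∀ i, i < m → ∀ (h : 3*i < 3*m), f ⟨3*i, h⟩ = -1 := by
      intro i hi h
      have h2 := hc ⟨3*i+1, by omega⟩
      rw [nCleaf hm i hi ⟨3*i+1, by omega⟩ ⟨3*i, by omega⟩ rfl rfl,
        Finset.sum_singleton] at h2
      rcases hf ⟨3*i, by omega⟩ with h | h <;> omega
    rw [hsum, sum_range_cat]
    have hb : ∀ i ∈ Finset.range m,
        ((if h : 3*i < 3*m then f ⟨3*i, h⟩ else 0)
          + (if h : 3*i+1 < 3*m then f ⟨3*i+1, h⟩ else 0)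
          + (if h : 3*i+2 < 3*m then f ⟨3*i+2, h⟩ else 0))
        ≤ (1:ℤ) - (if i = 0 then 2 else 0) - (if i = m-1 then 2 else 0) := by
      intro i hi
      rw [Finset.mem_range] at hi
      rw [dif_pos (by omega : 3*i < 3*m), dif_pos (by omega : 3*i+1 < 3*m),
        dif_pos (by omega : 3*i+2 < 3*m)]
      have h1 := hspine i hi (by omega)
      by_cases h2 : i = 0
      · subst h2
        rw [if_pos rfl, if_neg (by omega)]
        have h3 := hc ⟨3*0, by omega⟩
        rw [nC0 hm ⟨3*0, by omega⟩ ⟨3*0+1, by omega⟩ ⟨3*0+2, by omega⟩ ⟨3*1, by omega⟩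
            (by simp only [Fin.val_mk] <;> omega) (by simp only [Fin.val_mk] <;> omega)
            (by simp only [Fin.val_mk] <;> omega) (by simp only [Fin.val_mk] <;> omega),
          sum_triple _ _ _ _ (by simp [Fin.ext_iff]) (by simp [Fin.ext_iff])
            (by simp [Fin.ext_iff])] at h3
        have h4 := hspine 1 (by omega) (by omega)
        rcases hf ⟨3*0+1, by omega⟩ with h6 | h6 <;>
          rcases hf ⟨3*0+2, by omega⟩ with h7 | h7 <;> omega
      · by_cases h3 : i = m-1
        · rw [if_neg h2, if_pos h3]
          have hend := hc ⟨3*i, by omega⟩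
          rw [nCend hm ⟨3*i, by omega⟩ ⟨3*(m-2), by omega⟩ ⟨3*i+1, by omega⟩
              ⟨3*i+2, by omega⟩ (by simp only [Fin.val_mk] <;> omega)
              (by simp only [Fin.val_mk] <;> omega) (by simp only [Fin.val_mk] <;> omega)
              (by simp only [Fin.val_mk] <;> omega),
            sum_triple _ _ _ _ (by simp [Fin.ext_iff] <;> omega) (by simp [Fin.ext_iff] <;> omega)
              (by simp [Fin.ext_iff] <;> omega)] at hend
          have h4 := hspine (m-2) (by omega) (by omega)
          rcases hf ⟨3*i+1, by omega⟩ with h6 | h6 <;>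
            rcases hf ⟨3*i+2, by omega⟩ with h7 | h7 <;> omega
        · rw [if_neg h2, if_neg h3]
          rcases hf ⟨3*i+1, by omega⟩ with h6 | h6 <;>
            rcases hf ⟨3*i+2, by omega⟩ with h7 | h7 <;> omega
    calc ∑ i ∈ Finset.range m, ((if h : 3*i < 3*m then f ⟨3*i, h⟩ else 0)
          + (if h : 3*i+1 < 3*m then f ⟨3*i+1, h⟩ else 0)
          + (if h : 3*i+2 < 3*m then f ⟨3*i+2, h⟩ else 0))
        ≤ ∑ i ∈ Finset.range m, ((1:ℤ) - (if i = 0 then 2 else 0)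
            - (if i = m-1 then 2 else 0)) := Finset.sum_le_sum hb
      _ = (m:ℤ) - 4 := sum_B hm

/-- For every integer `k` there exists a tree `T` with `γ⁰_st(T) = k`. -/
theorem exists_tree_istdn_eq (k : ℤ) :
    ∃ (n : ℕ) (T : SimpleGraph (Fin n)) (_ : DecidableRel T.Adj),
      T.Connected ∧ T.IsAcyclic ∧
      IsGreatest {w : ℤ | ∃ f : Fin n → ℤ,
          (∀ v, f v = 1 ∨ f v = -1) ∧
          (∀ v : Fin n, ∑ u ∈ T.neighborFinset v, f u ≤ 0) ∧
          w = ∑ v, f v} k := by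
  rcases le_or_gt (-2) k with hk | hk
  · obtain ⟨m, hm2, hmk⟩ : ∃ m : ℕ, 2 ≤ m ∧ (m:ℤ) - 4 = k :=
      ⟨(k+4).toNat, by omega, by omega⟩
    subst hmk
    obtain ⟨hconn, hacy, hgre⟩ := caterpillar hm2
    exact ⟨3*m, pg (3*m) pC hpC, pgDec, hconn, hacy, hgre⟩
  · obtain ⟨t, ht, htk⟩ : ∃ t : ℕ, 1 ≤ t ∧ -1 - (t:ℤ) = k :=
      ⟨(-1-k).toNat, by omega, by omega⟩
    subst htk
    obtain ⟨hconn, hacy, hgre⟩ := spider t ht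
    exact ⟨3*t+1, pg (3*t+1) pS hpS, pgDec, hconn, hacy, hgre⟩
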